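/- For the square lattice mass-spring model with nearest and next-to-nearest neighbor harmonic springs, at the equilibrium dilation r* = (K₁a₁ + √2 K₂a₂)/(K₁+2K₂): the continuum constant λ̃_LH(r*Id) = (K₁/12)β·min{1, 2ακ} is always strictly positive, whereas λ_atom(r*Id) > 0 if and only if β < 2, equivalently iff α ≥ 1/2, or α < 1/2 and κ < 1/(2(1−2α)). -/

import Mathlib

open Real

noncomputable section

/-- `𝓡 = {±e₁, ±e₂, e₁±e₂, −e₁±e₂}` for the square lattice with nearest and
next-to-nearest neighbours. -/
def sqR : Finset (Fin 2 → ℤ) :=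
  {![1, 0], ![-1, 0], ![0, 1], ![0, -1], ![1, 1], ![1, -1], ![-1, 1], ![-1, -1]}

/-- The Hessian `K = D²W_atom((r*ρ)_ρ)` of the mass-spring energy at the
equilibrium dilation `r* Id`:
`K_{jρlσ} = δ_{ρσ}δ_{|ρ|1}[δ_{jl}(K₁/2)(1−a₁/r*) + ρ_jρ_l K₁a₁/(2r*)]
  + δ_{ρσ}δ_{|ρ|√2}[δ_{jl}(K₂/2)(1−a₂/(√2 r*)) + ρ_jρ_l K₂a₂/(4√2 r*)]`. -/
def sqK (K₁ K₂ a₁ a₂ rs : ℝ) : Fin 2 → ↥sqR → Fin 2 → ↥sqR → ℝ :=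
  fun j ρ l σ =>
    if ρ = σ then
      (if ρ.1 0 * ρ.1 0 + ρ.1 1 * ρ.1 1 = 1 then
        (if j = l then 1 else 0) * (K₁ / 2) * (1 - a₁ / rs) +
          (ρ.1 j : ℝ) * (ρ.1 l : ℝ) * (K₁ * a₁ / (2 * rs))
      else
        (if j = l then 1 else 0) * (K₂ / 2) * (1 - a₂ / (Real.sqrt 2 * rs)) +
          (ρ.1 j : ℝ) * (ρ.1 l : ℝ) * (K₂ * a₂ / (4 * Real.sqrt 2 * rs)))
    else 0

/-- `ρ·k`. -/
def ipk (ρ : Fin 2 → ℤ) (k : Fin 2 → ℝ) : ℝ :=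
  ∑ i, (ρ i : ℝ) * k i

/-- `K[ξ⊗v, ξ⊗v]`. -/
def Qform (K : Fin 2 → ↥sqR → Fin 2 → ↥sqR → ℝ) (ξ : Fin 2 → ℝ)
    (v : ↥sqR → ℝ) : ℝ :=
  ∑ j, ∑ l, ∑ ρ : ↥sqR, ∑ σ : ↥sqR, K j ρ l σ * (ξ j * v ρ) * (ξ l * v σ)

/-- The atomistic stability constant (cosine/sine representation). -/
def lamAtomCS (K : Fin 2 → ↥sqR → Fin 2 → ↥sqR → ℝ) : ℝ :=
  sInf { r : ℝ | ∃ (ξ k : Fin 2 → ℝ), ξ ≠ 0 ∧ k ≠ 0 ∧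
    (∀ i, k i ∈ Set.Ico 0 (2 * π)) ∧
    r = (Qform K ξ (fun ρ => Real.cos (ipk ρ.1 k) - 1) +
          Qform K ξ (fun ρ => Real.sin (ipk ρ.1 k))) /
        ((∑ i, (ξ i) ^ 2) *
          ((∑ ρ : ↥sqR, (Real.cos (ipk ρ.1 k) - 1) ^ 2) +
            (∑ ρ : ↥sqR, (Real.sin (ipk ρ.1 k)) ^ 2))) }

/-- The modified Legendre–Hadamard constant `λ̃_LH`. -/
def lamTildeLH (K : Fin 2 → ↥sqR → Fin 2 → ↥sqR → ℝ) : ℝ :=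
  sInf { r : ℝ | ∃ ξ η : Fin 2 → ℝ, ξ ≠ 0 ∧ η ≠ 0 ∧
    r = Qform K ξ (fun ρ => ipk ρ.1 η) /
        ((∑ i, (ξ i) ^ 2) * (∑ ρ : ↥sqR, (ipk ρ.1 η) ^ 2)) }


set_option maxHeartbeats 1600000 in
lemma quad_aux (a b c X Y : ℝ) (ha : 0 ≤ a) (hc : 0 ≤ c) (hdet : b ^ 2 ≤ a * c) :
    0 ≤ a * X ^ 2 + 2 * b * (X * Y) + c * Y ^ 2 := by
  rcases ha.eq_or_lt with h | h
  · have hb : b = 0 := by nlinarith [sq_nonneg b]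
    rw [← h, hb]
    simpa using mul_nonneg hc (sq_nonneg Y)
  · nlinarith [sq_nonneg (a * X + b * Y), mul_nonneg (sub_nonneg.2 hdet) (sq_nonneg Y)]

set_option maxHeartbeats 1600000 in
lemma det_aux (d₁ d₂ q c w : ℝ) (hd₁ : 0 ≤ d₁) (hd₂ : 0 ≤ d₂) (hq : 0 ≤ q) (hc : 0 ≤ c)
    (hw : 0 ≤ w) (hwc : w ≤ c ^ 2) (hQ : 2 * d₂ * c ≤ q + d₁ * c / 2) :
    4 * d₂ ^ 2 * w ≤ d₁ ^ 2 * w / 4 + d₁ * q * c + q ^ 2 := by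
  rcases hc.eq_or_lt with h | h
  · have hw0 : w = 0 := le_antisymm (by nlinarith) hw
    rw [hw0, ← h]
    nlinarith [sq_nonneg q]
  · have h1 : (2 * d₂ * c) ^ 2 * w ≤ (q + d₁ * c / 2) ^ 2 * w :=
      mul_le_mul_of_nonneg_right (pow_le_pow_left₀ (by positivity) hQ 2) hw
    have h2 : (d₁ * c / 2) ^ 2 * (c ^ 2 - w) ≤ (q + d₁ * c / 2) ^ 2 * (c ^ 2 - w) :=
      mul_le_mul_of_nonneg_right (pow_le_pow_left₀ (by positivity) (by linarith) 2) (by linarith)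
    have key : 0 ≤ c ^ 2 * (d₁ ^ 2 * w / 4 + d₁ * q * c + q ^ 2 - 4 * d₂ ^ 2 * w) := by
      nlinarith [h1, h2]
    nlinarith [key, mul_pos h h]

set_option maxHeartbeats 1600000 in
lemma atom_key (m d₁ d₂ ε x y T X Y : ℝ)
    (hd₁ : 0 < d₁) (hd₂ : 0 < d₂)
    (hεm : 6 * ε ≤ m) (hεd1 : 6 * ε ≤ d₁) (hεd2 : 6 * ε ≤ d₂) (hε0 : 0 ≤ ε)
    (hx : -1 ≤ x) (hx1 : x ≤ 1) (hy : -1 ≤ y) (hy1 : y ≤ 1)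
    (hT : T ^ 2 = (1 - x ^ 2) * (1 - y ^ 2)) :
    ε * ((X ^ 2 + Y ^ 2) *
        (2 * (2 - 2 * x) + 2 * (2 - 2 * y) + 2 * (2 - 2 * (x * y - T)) + 2 * (2 - 2 * (x * y + T)))) ≤
      2 * (2 - 2 * x) * ((m - d₁ / 2) * (X ^ 2 + Y ^ 2) + d₁ * X ^ 2) +
      2 * (2 - 2 * y) * ((m - d₁ / 2) * (X ^ 2 + Y ^ 2) + d₁ * Y ^ 2) +
      2 * (2 - 2 * (x * y - T)) * (-(m - d₁ / 2) / 2 * (X ^ 2 + Y ^ 2) + d₂ * (X + Y) ^ 2) +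
      2 * (2 - 2 * (x * y + T)) * (-(m - d₁ / 2) / 2 * (X ^ 2 + Y ^ 2) + d₂ * (X - Y) ^ 2) := by
  obtain ⟨A, hA⟩ : ∃ A, A = 1 - x := ⟨_, rfl⟩
  obtain ⟨B, hB⟩ : ∃ B, B = 1 - y := ⟨_, rfl⟩
  obtain ⟨C, hC⟩ : ∃ C, C = A + B - A * B := ⟨_, rfl⟩
  obtain ⟨q, hq⟩ : ∃ q, q = (m - ε) * (A * B) + (2 * d₂ - 3 * ε) * C := ⟨_, rfl⟩
  obtain ⟨M₁, hM1⟩ : ∃ M₁, M₁ = q + d₁ / 2 * (A * (2 - B)) := ⟨_, rfl⟩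
  obtain ⟨M₂, hM2⟩ : ∃ M₂, M₂ = q + d₁ / 2 * (B * (2 - A)) := ⟨_, rfl⟩
  have hA0 : 0 ≤ A := by rw [hA]; linarith
  have hA2 : A ≤ 2 := by rw [hA]; linarith
  have hB0 : 0 ≤ B := by rw [hB]; linarith
  have hB2 : B ≤ 2 := by rw [hB]; linarith
  have hC0 : 0 ≤ C := by
    rw [hC]
    nlinarith [mul_nonneg hA0 (by linarith : (0:ℝ) ≤ 2 - B),
      mul_nonneg hB0 (by linarith : (0:ℝ) ≤ 2 - A)]
  have hq0 : 0 ≤ q := by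
    rw [hq]
    have h1 := mul_nonneg (by linarith : (0:ℝ) ≤ m - ε) (mul_nonneg hA0 hB0)
    have h2 := mul_nonneg (by linarith : (0:ℝ) ≤ 2 * d₂ - 3 * ε) hC0
    linarith
  have hM10 : 0 ≤ M₁ := by
    rw [hM1]
    have := mul_nonneg hd₁.le (mul_nonneg hA0 (by linarith : (0:ℝ) ≤ 2 - B))
    linarith
  have hM20 : 0 ≤ M₂ := by
    rw [hM2]
    have := mul_nonneg hd₁.le (mul_nonneg hB0 (by linarith : (0:ℝ) ≤ 2 - A))
    linarith
  have hW0 : 0 ≤ A * (2 - A) * B * (2 - B) := by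
    have h1 : 0 ≤ A * (2 - A) := mul_nonneg hA0 (by linarith)
    have h2 : 0 ≤ B * (2 - B) := mul_nonneg hB0 (by linarith)
    nlinarith
  have hWC : A * (2 - A) * B * (2 - B) ≤ C ^ 2 := by
    rw [hC]
    nlinarith [sq_nonneg (A * (2 - B) - B * (2 - A))]
  have hQc : 2 * d₂ * C ≤ q + d₁ * C / 2 := by
    rw [hq]
    have h1 : 0 ≤ (m - ε) * (A * B) := mul_nonneg (by linarith) (mul_nonneg hA0 hB0)
    have h2 : 0 ≤ (d₁ / 2 - 3 * ε) * C := mul_nonneg (by linarith) hC0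
    nlinarith
  have hdet : (2 * T * d₂) ^ 2 ≤ M₁ * M₂ := by
    have hMM : M₁ * M₂ = q ^ 2 + d₁ * q * C + d₁ ^ 2 * (A * (2 - A) * B * (2 - B)) / 4 := by
      rw [hM1, hM2, hC]; ring
    have hT2 : (2 * T * d₂) ^ 2 = 4 * d₂ ^ 2 * (A * (2 - A) * B * (2 - B)) := by
      have h : (1 - x ^ 2) * (1 - y ^ 2) = A * (2 - A) * B * (2 - B) := by rw [hA, hB]; ring
      calc (2 * T * d₂) ^ 2 = 4 * d₂ ^ 2 * T ^ 2 := by ring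
        _ = 4 * d₂ ^ 2 * (A * (2 - A) * B * (2 - B)) := by rw [hT, h]
    rw [hMM, hT2]
    linarith [det_aux d₁ d₂ q C (A * (2 - A) * B * (2 - B)) hd₁.le hd₂.le hq0 hC0 hW0 hWC hQc]
  have hquad : 0 ≤ M₁ * X ^ 2 + 2 * (2 * T * d₂) * (X * Y) + M₂ * Y ^ 2 :=
    quad_aux M₁ (2 * T * d₂) M₂ X Y hM10 hM20 hdet
  have hiden : 2 * (2 - 2 * x) * ((m - d₁ / 2) * (X ^ 2 + Y ^ 2) + d₁ * X ^ 2) +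
      2 * (2 - 2 * y) * ((m - d₁ / 2) * (X ^ 2 + Y ^ 2) + d₁ * Y ^ 2) +
      2 * (2 - 2 * (x * y - T)) * (-(m - d₁ / 2) / 2 * (X ^ 2 + Y ^ 2) + d₂ * (X + Y) ^ 2) +
      2 * (2 - 2 * (x * y + T)) * (-(m - d₁ / 2) / 2 * (X ^ 2 + Y ^ 2) + d₂ * (X - Y) ^ 2)
      - ε * ((X ^ 2 + Y ^ 2) *
        (2 * (2 - 2 * x) + 2 * (2 - 2 * y) + 2 * (2 - 2 * (x * y - T)) + 2 * (2 - 2 * (x * y + T))))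
      = 4 * (M₁ * X ^ 2 + 2 * (2 * T * d₂) * (X * Y) + M₂ * Y ^ 2) := by
    rw [hM1, hM2, hq, hC, hA, hB]; ring
  linarith [hiden, hquad]

set_option maxHeartbeats 1600000 in
lemma LH_key (c1 c2 d1 d2 X Y P Q : ℝ) (hcc : c1 + 2 * c2 = 0)
    (hd1 : 0 < d1) (hd2 : 0 < d2) :
    min (d1/6) (2*d2/3) * (((X^2+Y^2)) * (6 * (P^2+Q^2))) ≤
      2 * P^2 * (c1 * (X^2+Y^2) + d1 * X^2)
      + 2 * Q^2 * (c1 * (X^2+Y^2) + d1 * Y^2)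
      + 2 * (P + Q)^2 * (c2 * (X^2+Y^2) + d2 * (X + Y)^2)
      + 2 * (P - Q)^2 * (c2 * (X^2+Y^2) + d2 * (X - Y)^2) := by
  have hc1 : c1 = -2 * c2 := by linarith
  subst hc1
  rcases le_total d1 (4*d2) with h | h
  · rw [min_eq_left (by linarith)]
    nlinarith [mul_nonneg (by linarith : (0:ℝ) ≤ d1 + 4*d2) (sq_nonneg (P*X + Q*Y)),
      mul_nonneg (by linarith : (0:ℝ) ≤ 4*d2 - d1) (sq_nonneg (P*Y + Q*X))]
  · rw [min_eq_right (by linarith)]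
    nlinarith [mul_nonneg (by linarith : (0:ℝ) ≤ d1 + 4*d2) (sq_nonneg (P*X + Q*Y)),
      mul_nonneg (by linarith : (0:ℝ) ≤ d1 - 4*d2) (sq_nonneg (P*X - Q*Y))]

set_option maxHeartbeats 1600000 in
lemma atom_lb (c1 c2 d1 d2 L u1 u2 u3 u4 X Y : ℝ)
    (hu1 : 0 ≤ u1) (hu2 : 0 ≤ u2) (hu3 : 0 ≤ u3) (hu4 : 0 ≤ u4)
    (hd1 : 0 ≤ d1) (hd2 : 0 ≤ d2) (hc1 : 0 ≤ c1 + L) (hc2 : 0 ≤ c2 + L) :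
    -L * ((X^2+Y^2) * (u1 + u2 + u3 + u4)) ≤
      u1 * (c1 * (X^2+Y^2) + d1 * X^2) + u2 * (c1 * (X^2+Y^2) + d1 * Y^2)
      + u3 * (c2 * (X^2+Y^2) + d2 * (X + Y)^2) + u4 * (c2 * (X^2+Y^2) + d2 * (X - Y)^2) := by
  have hs : (0:ℝ) ≤ X^2+Y^2 := by positivity
  have t1 : 0 ≤ u1 * ((c1+L) * (X^2+Y^2) + d1 * X^2) :=
    mul_nonneg hu1 (add_nonneg (mul_nonneg hc1 hs) (mul_nonneg hd1 (sq_nonneg X)))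
  have t2 : 0 ≤ u2 * ((c1+L) * (X^2+Y^2) + d1 * Y^2) :=
    mul_nonneg hu2 (add_nonneg (mul_nonneg hc1 hs) (mul_nonneg hd1 (sq_nonneg Y)))
  have t3 : 0 ≤ u3 * ((c2+L) * (X^2+Y^2) + d2 * (X+Y)^2) :=
    mul_nonneg hu3 (add_nonneg (mul_nonneg hc2 hs) (mul_nonneg hd2 (sq_nonneg (X+Y))))
  have t4 : 0 ≤ u4 * ((c2+L) * (X^2+Y^2) + d2 * (X-Y)^2) :=
    mul_nonneg hu4 (add_nonneg (mul_nonneg hc2 hs) (mul_nonneg hd2 (sq_nonneg (X-Y))))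
  nlinarith [t1, t2, t3, t4]

lemma ipk_e1 (k : Fin 2 → ℝ) : ipk ![1,0] k = k 0 := by simp [ipk, Fin.sum_univ_two]
lemma ipk_me1 (k : Fin 2 → ℝ) : ipk ![-1,0] k = -(k 0) := by simp [ipk, Fin.sum_univ_two]
lemma ipk_e2 (k : Fin 2 → ℝ) : ipk ![0,1] k = k 1 := by simp [ipk, Fin.sum_univ_two]
lemma ipk_me2 (k : Fin 2 → ℝ) : ipk ![0,-1] k = -(k 1) := by simp [ipk, Fin.sum_univ_two]
lemma ipk_pp (k : Fin 2 → ℝ) : ipk ![1,1] k = k 0 + k 1 := by simp [ipk, Fin.sum_univ_two]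
lemma ipk_pm (k : Fin 2 → ℝ) : ipk ![1,-1] k = k 0 - k 1 := by
  simp [ipk, Fin.sum_univ_two]; ring
lemma ipk_mp (k : Fin 2 → ℝ) : ipk ![-1,1] k = -(k 0 - k 1) := by
  simp [ipk, Fin.sum_univ_two]; ring
lemma ipk_mm (k : Fin 2 → ℝ) : ipk ![-1,-1] k = -(k 0 + k 1) := by
  simp [ipk, Fin.sum_univ_two]; ring

lemma sum8 (f : ↥sqR → ℝ) : ∑ ρ : ↥sqR, f ρ =
    f ⟨![1,0], by decide⟩ + f ⟨![-1,0], by decide⟩ + f ⟨![0,1], by decide⟩ + f ⟨![0,-1], by decide⟩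
    + f ⟨![1,1], by decide⟩ + f ⟨![1,-1], by decide⟩ + f ⟨![-1,1], by decide⟩
    + f ⟨![-1,-1], by decide⟩ := by
  have e1 : ∑ ρ : ↥sqR, f ρ = ∑ v ∈ sqR, (if h : v ∈ sqR then f ⟨v, h⟩ else 0) := by
    rw [← Finset.sum_coe_sort sqR (fun v => if h : v ∈ sqR then f ⟨v, h⟩ else 0)]
    refine Finset.sum_congr rfl fun ρ _ => ?_
    rw [dif_pos ρ.2]
  rw [e1]
  show ∑ v ∈ ({![1, 0], ![-1, 0], ![0, 1], ![0, -1], ![1, 1], ![1, -1], ![-1, 1], ![-1, -1]} :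
      Finset (Fin 2 → ℤ)), _ = _
  rw [Finset.sum_insert (by decide), Finset.sum_insert (by decide), Finset.sum_insert (by decide),
    Finset.sum_insert (by decide), Finset.sum_insert (by decide), Finset.sum_insert (by decide),
    Finset.sum_insert (by decide), Finset.sum_singleton]
  simp only [show (![1, 0] : Fin 2 → ℤ) ∈ sqR by decide, show (![-1, 0] : Fin 2 → ℤ) ∈ sqR by decide,
    show (![0, 1] : Fin 2 → ℤ) ∈ sqR by decide, show (![0, -1] : Fin 2 → ℤ) ∈ sqR by decide,
    show (![1, 1] : Fin 2 → ℤ) ∈ sqR by decide, show (![1, -1] : Fin 2 → ℤ) ∈ sqR by decide,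
    show (![-1, 1] : Fin 2 → ℤ) ∈ sqR by decide, show (![-1, -1] : Fin 2 → ℤ) ∈ sqR by decide,
    dite_true]
  ring

set_option maxHeartbeats 1600000 in
lemma Qform_sqK (K₁ K₂ a₁ a₂ rs : ℝ) (ξ : Fin 2 → ℝ) (w : (Fin 2 → ℤ) → ℝ) :
    Qform (sqK K₁ K₂ a₁ a₂ rs) ξ (fun ρ => w ρ.1) =
      (w ![1,0] ^ 2 + w ![-1,0] ^ 2) * ((K₁/2*(1-a₁/rs)) * ((ξ 0)^2+(ξ 1)^2) + (K₁*a₁/(2*rs)) * (ξ 0)^2)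
      + (w ![0,1] ^ 2 + w ![0,-1] ^ 2) * ((K₁/2*(1-a₁/rs)) * ((ξ 0)^2+(ξ 1)^2) + (K₁*a₁/(2*rs)) * (ξ 1)^2)
      + (w ![1,1] ^ 2 + w ![-1,-1] ^ 2) * ((K₂/2*(1-a₂/(Real.sqrt 2*rs))) * ((ξ 0)^2+(ξ 1)^2)
          + (K₂*a₂/(4*Real.sqrt 2*rs)) * (ξ 0 + ξ 1)^2)
      + (w ![1,-1] ^ 2 + w ![-1,1] ^ 2) * ((K₂/2*(1-a₂/(Real.sqrt 2*rs))) * ((ξ 0)^2+(ξ 1)^2)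
          + (K₂*a₂/(4*Real.sqrt 2*rs)) * (ξ 0 - ξ 1)^2) := by
  have h : ∀ j l : Fin 2, ∑ ρ : ↥sqR, ∑ σ : ↥sqR,
      sqK K₁ K₂ a₁ a₂ rs j ρ l σ * (ξ j * w ρ.1) * (ξ l * w σ.1)
      = ∑ ρ : ↥sqR, (if ρ.1 0 * ρ.1 0 + ρ.1 1 * ρ.1 1 = 1 then
        (if j = l then 1 else 0) * (K₁ / 2) * (1 - a₁ / rs) +
          (ρ.1 j : ℝ) * (ρ.1 l : ℝ) * (K₁ * a₁ / (2 * rs))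
      else
        (if j = l then 1 else 0) * (K₂ / 2) * (1 - a₂ / (Real.sqrt 2 * rs)) +
          (ρ.1 j : ℝ) * (ρ.1 l : ℝ) * (K₂ * a₂ / (4 * Real.sqrt 2 * rs)))
        * (ξ j * w ρ.1) * (ξ l * w ρ.1) := by
    intro j l
    refine Finset.sum_congr rfl fun ρ _ => ?_
    rw [Finset.sum_eq_single ρ]
    · simp [sqK]
    · intro σ _ hσ
      simp [sqK, if_neg (Ne.symm hσ)]
    · intro h'
      exact absurd (Finset.mem_univ ρ) h'
  simp only [Qform, h]
  simp only [Fin.sum_univ_two]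
  rw [sum8, sum8, sum8, sum8]
  norm_num [Matrix.cons_val_zero, Matrix.cons_val_one, Matrix.head_cons]
  ring

set_option maxHeartbeats 1600000 in
lemma atom_num (K₁ K₂ a₁ a₂ rs : ℝ) (ξ k : Fin 2 → ℝ) :
    Qform (sqK K₁ K₂ a₁ a₂ rs) ξ (fun ρ => Real.cos (ipk ρ.1 k) - 1) +
      Qform (sqK K₁ K₂ a₁ a₂ rs) ξ (fun ρ => Real.sin (ipk ρ.1 k)) =
      2 * (2 - 2 * Real.cos (k 0)) *
        ((K₁/2*(1-a₁/rs)) * ((ξ 0)^2+(ξ 1)^2) + (K₁*a₁/(2*rs)) * (ξ 0)^2)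
      + 2 * (2 - 2 * Real.cos (k 1)) *
        ((K₁/2*(1-a₁/rs)) * ((ξ 0)^2+(ξ 1)^2) + (K₁*a₁/(2*rs)) * (ξ 1)^2)
      + 2 * (2 - 2 * Real.cos (k 0 + k 1)) *
        ((K₂/2*(1-a₂/(Real.sqrt 2*rs))) * ((ξ 0)^2+(ξ 1)^2) + (K₂*a₂/(4*Real.sqrt 2*rs)) * (ξ 0 + ξ 1)^2)
      + 2 * (2 - 2 * Real.cos (k 0 - k 1)) *
        ((K₂/2*(1-a₂/(Real.sqrt 2*rs))) * ((ξ 0)^2+(ξ 1)^2) + (K₂*a₂/(4*Real.sqrt 2*rs)) * (ξ 0 - ξ 1)^2) := by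
  rw [Qform_sqK K₁ K₂ a₁ a₂ rs ξ (fun v => Real.cos (ipk v k) - 1),
    Qform_sqK K₁ K₂ a₁ a₂ rs ξ (fun v => Real.sin (ipk v k))]
  simp only [ipk_e1, ipk_me1, ipk_e2, ipk_me2, ipk_pp, ipk_pm, ipk_mp, ipk_mm,
    Real.cos_neg, Real.sin_neg]
  linear_combination
    (2 * ((K₁/2*(1-a₁/rs)) * ((ξ 0)^2+(ξ 1)^2) + (K₁*a₁/(2*rs)) * (ξ 0)^2)) *
      (Real.sin_sq_add_cos_sq (k 0)) +
    (2 * ((K₁/2*(1-a₁/rs)) * ((ξ 0)^2+(ξ 1)^2) + (K₁*a₁/(2*rs)) * (ξ 1)^2)) *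
      (Real.sin_sq_add_cos_sq (k 1)) +
    (2 * ((K₂/2*(1-a₂/(Real.sqrt 2*rs))) * ((ξ 0)^2+(ξ 1)^2) + (K₂*a₂/(4*Real.sqrt 2*rs)) * (ξ 0 + ξ 1)^2)) *
      (Real.sin_sq_add_cos_sq (k 0 + k 1)) +
    (2 * ((K₂/2*(1-a₂/(Real.sqrt 2*rs))) * ((ξ 0)^2+(ξ 1)^2) + (K₂*a₂/(4*Real.sqrt 2*rs)) * (ξ 0 - ξ 1)^2)) *
      (Real.sin_sq_add_cos_sq (k 0 - k 1))

lemma atom_den (k : Fin 2 → ℝ) :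
    ((∑ ρ : ↥sqR, (Real.cos (ipk ρ.1 k) - 1) ^ 2) + (∑ ρ : ↥sqR, (Real.sin (ipk ρ.1 k)) ^ 2)) =
      2 * (2 - 2 * Real.cos (k 0)) + 2 * (2 - 2 * Real.cos (k 1)) +
      2 * (2 - 2 * Real.cos (k 0 + k 1)) + 2 * (2 - 2 * Real.cos (k 0 - k 1)) := by
  rw [sum8 (fun ρ => (Real.cos (ipk ρ.1 k) - 1) ^ 2),
    sum8 (fun ρ => (Real.sin (ipk ρ.1 k)) ^ 2)]
  simp only [ipk_e1, ipk_me1, ipk_e2, ipk_me2, ipk_pp, ipk_pm, ipk_mp, ipk_mm,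
    Real.cos_neg, Real.sin_neg]
  linear_combination (2:ℝ) * (Real.sin_sq_add_cos_sq (k 0)) +
    (2:ℝ) * (Real.sin_sq_add_cos_sq (k 1)) +
    (2:ℝ) * (Real.sin_sq_add_cos_sq (k 0 + k 1)) +
    (2:ℝ) * (Real.sin_sq_add_cos_sq (k 0 - k 1))

lemma lh_den (η : Fin 2 → ℝ) :
    (∑ ρ : ↥sqR, (ipk ρ.1 η) ^ 2) = 6 * ((η 0)^2 + (η 1)^2) := by
  rw [sum8 (fun ρ => (ipk ρ.1 η) ^ 2)]
  simp only [ipk_e1, ipk_me1, ipk_e2, ipk_me2, ipk_pp, ipk_pm, ipk_mp, ipk_mm]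
  ring

set_option maxHeartbeats 1600000 in
lemma lh_num (K₁ K₂ a₁ a₂ rs : ℝ) (ξ η : Fin 2 → ℝ) :
    Qform (sqK K₁ K₂ a₁ a₂ rs) ξ (fun ρ => ipk ρ.1 η) =
      2 * (η 0)^2 * ((K₁/2*(1-a₁/rs)) * ((ξ 0)^2+(ξ 1)^2) + (K₁*a₁/(2*rs)) * (ξ 0)^2)
      + 2 * (η 1)^2 * ((K₁/2*(1-a₁/rs)) * ((ξ 0)^2+(ξ 1)^2) + (K₁*a₁/(2*rs)) * (ξ 1)^2)
      + 2 * (η 0 + η 1)^2 * ((K₂/2*(1-a₂/(Real.sqrt 2*rs))) * ((ξ 0)^2+(ξ 1)^2)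
          + (K₂*a₂/(4*Real.sqrt 2*rs)) * (ξ 0 + ξ 1)^2)
      + 2 * (η 0 - η 1)^2 * ((K₂/2*(1-a₂/(Real.sqrt 2*rs))) * ((ξ 0)^2+(ξ 1)^2)
          + (K₂*a₂/(4*Real.sqrt 2*rs)) * (ξ 0 - ξ 1)^2) := by
  rw [Qform_sqK K₁ K₂ a₁ a₂ rs ξ (fun v => ipk v η)]
  simp only [ipk_e1, ipk_me1, ipk_e2, ipk_me2, ipk_pp, ipk_pm, ipk_mp, ipk_mm]
  ring

lemma xi_pos (ξ : Fin 2 → ℝ) (h : ξ ≠ 0) : 0 < (ξ 0)^2 + (ξ 1)^2 := by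
  have h' : ξ 0 ≠ 0 ∨ ξ 1 ≠ 0 := by
    by_contra hc
    push_neg at hc
    exact h (funext fun i => by fin_cases i <;> simp [hc.1, hc.2])
  rcases h' with h' | h' <;>
    nlinarith [mul_self_pos.mpr h', sq_nonneg (ξ 0), sq_nonneg (ξ 1)]

set_option maxHeartbeats 4000000 in
/-- for the square mass-spring lattice at the equilibrium
dilation `r* = (K₁a₁ + √2 K₂a₂)/(K₁+2K₂)`, with `α = a₂/(√2 a₁)`,
`κ = K₂/K₁`, `β = (1+2κ)/(1+2ακ)`: the continuum constant
`λ̃_LH(r* Id) = (K₁/12)β min{1, 2ακ} > 0` always, while `λ_atom(r* Id) > 0`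
iff `β < 2`, equivalently iff `α ≥ 1/2`, or `α < 1/2` and
`κ < 1/(2(1−2α))`. -/
theorem square_lattice_stability
    (K₁ K₂ a₁ a₂ : ℝ) (hK₁ : 0 < K₁) (hK₂ : 0 < K₂) (ha₁ : 0 < a₁)
    (ha₂ : 0 < a₂) :
    lamTildeLH (sqK K₁ K₂ a₁ a₂
        ((K₁ * a₁ + Real.sqrt 2 * K₂ * a₂) / (K₁ + 2 * K₂))) =
      K₁ / 12 * ((1 + 2 * (K₂ / K₁)) / (1 + 2 * (a₂ / (Real.sqrt 2 * a₁)) * (K₂ / K₁))) *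
        min 1 (2 * (a₂ / (Real.sqrt 2 * a₁)) * (K₂ / K₁)) ∧
    0 < lamTildeLH (sqK K₁ K₂ a₁ a₂
        ((K₁ * a₁ + Real.sqrt 2 * K₂ * a₂) / (K₁ + 2 * K₂))) ∧
    (0 < lamAtomCS (sqK K₁ K₂ a₁ a₂
        ((K₁ * a₁ + Real.sqrt 2 * K₂ * a₂) / (K₁ + 2 * K₂))) ↔
      (1 + 2 * (K₂ / K₁)) / (1 + 2 * (a₂ / (Real.sqrt 2 * a₁)) * (K₂ / K₁)) < 2) ∧
    ((1 + 2 * (K₂ / K₁)) / (1 + 2 * (a₂ / (Real.sqrt 2 * a₁)) * (K₂ / K₁)) < 2 ↔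
      (1 / 2 ≤ a₂ / (Real.sqrt 2 * a₁) ∨
        (a₂ / (Real.sqrt 2 * a₁) < 1 / 2 ∧
          K₂ / K₁ < 1 / (2 * (1 - 2 * (a₂ / (Real.sqrt 2 * a₁))))))) := by
  have h2 : Real.sqrt 2 * Real.sqrt 2 = 2 := Real.mul_self_sqrt (by norm_num)
  have hs2 : 0 < Real.sqrt 2 := Real.sqrt_pos.mpr (by norm_num)
  obtain ⟨rs, hrs_def⟩ : ∃ r : ℝ, r = (K₁ * a₁ + Real.sqrt 2 * K₂ * a₂) / (K₁ + 2 * K₂) := ⟨_, rfl⟩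
  rw [← hrs_def]
  have hrs : 0 < rs := by rw [hrs_def]; positivity
  have hrseq : rs * (K₁ + 2 * K₂) = K₁ * a₁ + Real.sqrt 2 * K₂ * a₂ := by
    rw [hrs_def]; field_simp
  obtain ⟨d1, hd1_def⟩ : ∃ r : ℝ, r = K₁*a₁/(2*rs) := ⟨_, rfl⟩
  obtain ⟨d2, hd2_def⟩ : ∃ r : ℝ, r = K₂*a₂/(4*Real.sqrt 2*rs) := ⟨_, rfl⟩
  have hd1 : 0 < d1 := by rw [hd1_def]; positivity
  have hd2 : 0 < d2 := by rw [hd2_def]; positivity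
  have hcc : K₁/2*(1-a₁/rs) + 2 * (K₂/2*(1-a₂/(Real.sqrt 2*rs))) = 0 := by
    field_simp
    linear_combination (Real.sqrt 2)*hrseq + (K₂*a₂)*h2
  have E1 : K₁ / 12 * ((1 + 2 * (K₂ / K₁)) / (1 + 2 * (a₂ / (Real.sqrt 2 * a₁)) * (K₂ / K₁))) = d1 / 6 := by
    rw [hd1_def]
    field_simp
    linear_combination (12*Real.sqrt 2)*hrseq + (12*K₂*a₂)*h2
  have E2 : K₁ / 12 * ((1 + 2 * (K₂ / K₁)) / (1 + 2 * (a₂ / (Real.sqrt 2 * a₁)) * (K₂ / K₁)))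
      * (2 * (a₂ / (Real.sqrt 2 * a₁)) * (K₂ / K₁)) = 2 * d2 / 3 := by
    rw [E1, hd1_def, hd2_def]
    field_simp
    linear_combination 0*hrseq + 0*h2
  have hc1K : K₁/2*(1-a₁/rs) = K₁/2 - d1 := by
    rw [hd1_def]; field_simp
  have hc2K : K₂/2*(1-a₂/(Real.sqrt 2*rs)) = -(K₁/2 - d1)/2 := by linarith [hcc, hc1K]
  -- ===================== LH part =====================
  have hLH : lamTildeLH (sqK K₁ K₂ a₁ a₂ rs) = min (d1/6) (2*d2/3) := by
    unfold lamTildeLH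
    have hbound : ∀ b ∈ { r : ℝ | ∃ ξ η : Fin 2 → ℝ, ξ ≠ 0 ∧ η ≠ 0 ∧
        r = Qform (sqK K₁ K₂ a₁ a₂ rs) ξ (fun ρ => ipk ρ.1 η) /
          ((∑ i, (ξ i) ^ 2) * (∑ ρ : ↥sqR, (ipk ρ.1 η) ^ 2)) },
        min (d1/6) (2*d2/3) ≤ b := by
      rintro b ⟨ξ, η, hξ, hη, rfl⟩
      have hsξ := xi_pos ξ hξ
      have hsη := xi_pos η hη
      rw [lh_num, lh_den, Fin.sum_univ_two, ← hd1_def, ← hd2_def]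
      rw [le_div_iff₀ (by nlinarith)]
      linarith [LH_key (K₁/2*(1-a₁/rs)) (K₂/2*(1-a₂/(Real.sqrt 2*rs))) d1 d2
        (ξ 0) (ξ 1) (η 0) (η 1) hcc hd1 hd2]
    have hmem1 : (d1/6) ∈ { r : ℝ | ∃ ξ η : Fin 2 → ℝ, ξ ≠ 0 ∧ η ≠ 0 ∧
        r = Qform (sqK K₁ K₂ a₁ a₂ rs) ξ (fun ρ => ipk ρ.1 η) /
          ((∑ i, (ξ i) ^ 2) * (∑ ρ : ↥sqR, (ipk ρ.1 η) ^ 2)) } := by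
      refine ⟨![1,-1], ![1,1], ?_, ?_, ?_⟩
      · intro h; have := congrFun h 0; norm_num at this
      · intro h; have := congrFun h 0; norm_num at this
      · rw [lh_num, lh_den, Fin.sum_univ_two]
        simp only [Matrix.cons_val_zero, Matrix.cons_val_one, Matrix.head_cons]
        rw [hc1K, hc2K, ← hd1_def, ← hd2_def]
        rw [eq_div_iff (by norm_num)]
        ring
    have hmem2 : (2*d2/3) ∈ { r : ℝ | ∃ ξ η : Fin 2 → ℝ, ξ ≠ 0 ∧ η ≠ 0 ∧
        r = Qform (sqK K₁ K₂ a₁ a₂ rs) ξ (fun ρ => ipk ρ.1 η) /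
          ((∑ i, (ξ i) ^ 2) * (∑ ρ : ↥sqR, (ipk ρ.1 η) ^ 2)) } := by
      refine ⟨![0,1], ![1,0], ?_, ?_, ?_⟩
      · intro h; have := congrFun h 1; norm_num at this
      · intro h; have := congrFun h 0; norm_num at this
      · rw [lh_num, lh_den, Fin.sum_univ_two]
        simp only [Matrix.cons_val_zero, Matrix.cons_val_one, Matrix.head_cons]
        rw [hc1K, hc2K, ← hd1_def, ← hd2_def]
        rw [eq_div_iff (by norm_num)]
        ring
    refine le_antisymm ?_ (le_csInf ⟨_, hmem1⟩ hbound)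
    refine le_min (csInf_le ⟨_, hbound⟩ hmem1) (csInf_le ⟨_, hbound⟩ hmem2)
  -- ===================== atomistic part =====================
  have hmemA : (K₁/2 - d1/2) ∈ { r : ℝ | ∃ ξ k : Fin 2 → ℝ, ξ ≠ 0 ∧ k ≠ 0 ∧
      (∀ i, k i ∈ Set.Ico 0 (2 * π)) ∧
      r = (Qform (sqK K₁ K₂ a₁ a₂ rs) ξ (fun ρ => Real.cos (ipk ρ.1 k) - 1) +
            Qform (sqK K₁ K₂ a₁ a₂ rs) ξ (fun ρ => Real.sin (ipk ρ.1 k))) /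
          ((∑ i, (ξ i) ^ 2) *
            ((∑ ρ : ↥sqR, (Real.cos (ipk ρ.1 k) - 1) ^ 2) +
              (∑ ρ : ↥sqR, (Real.sin (ipk ρ.1 k)) ^ 2))) } := by
    refine ⟨![1,0], ![π,π], ?_, ?_, ?_, ?_⟩
    · intro h; have := congrFun h 0; norm_num at this
    · intro h
      have := congrFun h 0
      simp only [Matrix.cons_val_zero, Pi.zero_apply] at this
      exact Real.pi_ne_zero this
    · intro i
      have hi : (![π, π] : Fin 2 → ℝ) i = π := by fin_cases i <;> rfl
      rw [hi]
      exact Set.mem_Ico.mpr ⟨Real.pi_pos.le, by linarith [Real.pi_pos]⟩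
    · rw [atom_num, atom_den, Fin.sum_univ_two]
      simp only [Matrix.cons_val_zero, Matrix.cons_val_one, Matrix.head_cons]
      have eπ : π + π = 2 * π := by ring
      have eπ' : π - π = 0 := sub_self π
      rw [eπ, eπ', Real.cos_two_pi, Real.cos_zero, Real.cos_pi]
      rw [hc1K, hc2K, ← hd1_def, ← hd2_def]
      rw [eq_div_iff (by norm_num)]
      ring
  have hbddA : BddBelow { r : ℝ | ∃ ξ k : Fin 2 → ℝ, ξ ≠ 0 ∧ k ≠ 0 ∧
      (∀ i, k i ∈ Set.Ico 0 (2 * π)) ∧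
      r = (Qform (sqK K₁ K₂ a₁ a₂ rs) ξ (fun ρ => Real.cos (ipk ρ.1 k) - 1) +
            Qform (sqK K₁ K₂ a₁ a₂ rs) ξ (fun ρ => Real.sin (ipk ρ.1 k))) /
          ((∑ i, (ξ i) ^ 2) *
            ((∑ ρ : ↥sqR, (Real.cos (ipk ρ.1 k) - 1) ^ 2) +
              (∑ ρ : ↥sqR, (Real.sin (ipk ρ.1 k)) ^ 2))) } := by
    refine ⟨-(|K₁/2 - d1| + |(K₁/2 - d1)/2|), ?_⟩
    rintro b ⟨ξ, k, hξ, hk, hik, rfl⟩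
    have hsξ := xi_pos ξ hξ
    have hk01 : k 0 ≠ 0 ∨ k 1 ≠ 0 := by
      by_contra hc
      push_neg at hc
      exact hk (funext fun i => by fin_cases i <;> simp [hc.1, hc.2])
    have hclt : ∀ i : Fin 2, k i ≠ 0 → Real.cos (k i) < 1 := by
      intro i hi
      obtain ⟨hi0, hi1⟩ := hik i
      refine lt_of_le_of_ne (Real.cos_le_one _) fun hcs => hi ?_
      exact (Real.cos_eq_one_iff_of_lt_of_lt (by linarith [Real.pi_pos]) hi1).mp hcs
    have hsum : 0 < 2 * (2 - 2 * Real.cos (k 0)) + 2 * (2 - 2 * Real.cos (k 1)) +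
        2 * (2 - 2 * Real.cos (k 0 + k 1)) + 2 * (2 - 2 * Real.cos (k 0 - k 1)) := by
      rcases hk01 with h | h <;>
        linarith [Real.cos_le_one (k 0), Real.cos_le_one (k 1),
          Real.cos_le_one (k 0 + k 1), Real.cos_le_one (k 0 - k 1), hclt _ h]
    rw [atom_num, atom_den, Fin.sum_univ_two, hc1K, hc2K, ← hd1_def, ← hd2_def]
    rw [le_div_iff₀ (by nlinarith)]
    have lb := atom_lb (K₁/2 - d1) (-(K₁/2 - d1)/2) d1 d2 (|K₁/2 - d1| + |(K₁/2 - d1)/2|)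
      (2 * (2 - 2 * Real.cos (k 0))) (2 * (2 - 2 * Real.cos (k 1)))
      (2 * (2 - 2 * Real.cos (k 0 + k 1))) (2 * (2 - 2 * Real.cos (k 0 - k 1))) (ξ 0) (ξ 1)
      (by linarith [Real.cos_le_one (k 0)]) (by linarith [Real.cos_le_one (k 1)])
      (by linarith [Real.cos_le_one (k 0 + k 1)]) (by linarith [Real.cos_le_one (k 0 - k 1)])
      hd1.le hd2.le
      (by linarith [neg_abs_le (K₁/2 - d1), le_abs_self (K₁/2 - d1),
        neg_abs_le ((K₁/2 - d1)/2), le_abs_self ((K₁/2 - d1)/2)])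
      (by linarith [neg_abs_le (K₁/2 - d1), le_abs_self (K₁/2 - d1),
        neg_abs_le ((K₁/2 - d1)/2), le_abs_self ((K₁/2 - d1)/2)])
    linarith [lb]
  have hAiff : 0 < lamAtomCS (sqK K₁ K₂ a₁ a₂ rs) ↔
      (1 + 2 * (K₂ / K₁)) / (1 + 2 * (a₂ / (Real.sqrt 2 * a₁)) * (K₂ / K₁)) < 2 := by
    unfold lamAtomCS
    constructor
    · intro hpos
      by_contra hB
      push_neg at hB
      have hKd : K₁ ≤ d1 := by
        have h12 := mul_le_mul_of_nonneg_left hB (by positivity : (0:ℝ) ≤ K₁/12)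
        linarith [E1]
      have := csInf_le hbddA hmemA
      linarith
    · intro hB
      have hKd : d1 < K₁ := by
        have h12 := mul_lt_mul_of_pos_left hB (by positivity : (0:ℝ) < K₁/12)
        linarith [E1]
      have hm : 0 < K₁/2 - d1/2 := by linarith
      set ε := min (K₁/2 - d1/2) (min d1 d2) / 6 with hε_def
      have hε0 : 0 < ε := by
        rw [hε_def]
        have := lt_min hm (lt_min hd1 hd2)
        positivity
      have hεm : 6 * ε ≤ K₁/2 - d1/2 := by
        rw [hε_def]; rw [mul_div_cancel₀ _ (by norm_num : (6:ℝ) ≠ 0)]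
        exact min_le_left _ _
      have hεd1 : 6 * ε ≤ d1 := by
        rw [hε_def]; rw [mul_div_cancel₀ _ (by norm_num : (6:ℝ) ≠ 0)]
        exact le_trans (min_le_right _ _) (min_le_left _ _)
      have hεd2 : 6 * ε ≤ d2 := by
        rw [hε_def]; rw [mul_div_cancel₀ _ (by norm_num : (6:ℝ) ≠ 0)]
        exact le_trans (min_le_right _ _) (min_le_right _ _)
      have hlow : ∀ b ∈ { r : ℝ | ∃ ξ k : Fin 2 → ℝ, ξ ≠ 0 ∧ k ≠ 0 ∧
          (∀ i, k i ∈ Set.Ico 0 (2 * π)) ∧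
          r = (Qform (sqK K₁ K₂ a₁ a₂ rs) ξ (fun ρ => Real.cos (ipk ρ.1 k) - 1) +
                Qform (sqK K₁ K₂ a₁ a₂ rs) ξ (fun ρ => Real.sin (ipk ρ.1 k))) /
              ((∑ i, (ξ i) ^ 2) *
                ((∑ ρ : ↥sqR, (Real.cos (ipk ρ.1 k) - 1) ^ 2) +
                  (∑ ρ : ↥sqR, (Real.sin (ipk ρ.1 k)) ^ 2))) }, ε ≤ b := by
        rintro b ⟨ξ, k, hξ, hk, hik, rfl⟩
        have hsξ := xi_pos ξ hξ
        have hk01 : k 0 ≠ 0 ∨ k 1 ≠ 0 := by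
          by_contra hc
          push_neg at hc
          exact hk (funext fun i => by fin_cases i <;> simp [hc.1, hc.2])
        have hclt : ∀ i : Fin 2, k i ≠ 0 → Real.cos (k i) < 1 := by
          intro i hi
          obtain ⟨hi0, hi1⟩ := hik i
          refine lt_of_le_of_ne (Real.cos_le_one _) fun hcs => hi ?_
          exact (Real.cos_eq_one_iff_of_lt_of_lt (by linarith [Real.pi_pos]) hi1).mp hcs
        have hsum : 0 < 2 * (2 - 2 * Real.cos (k 0)) + 2 * (2 - 2 * Real.cos (k 1)) +
            2 * (2 - 2 * Real.cos (k 0 + k 1)) + 2 * (2 - 2 * Real.cos (k 0 - k 1)) := by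
          rcases hk01 with h | h <;>
            linarith [Real.cos_le_one (k 0), Real.cos_le_one (k 1),
              Real.cos_le_one (k 0 + k 1), Real.cos_le_one (k 0 - k 1), hclt _ h]
        rw [atom_num, atom_den, Fin.sum_univ_two, hc1K, hc2K, ← hd1_def, ← hd2_def]
        rw [le_div_iff₀ (by nlinarith)]
        rw [Real.cos_add, Real.cos_sub]
        have hsin0 : Real.sin (k 0) ^ 2 = 1 - Real.cos (k 0) ^ 2 := Real.sin_sq (k 0)
        have hsin1 : Real.sin (k 1) ^ 2 = 1 - Real.cos (k 1) ^ 2 := Real.sin_sq (k 1)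
        have hT : (Real.sin (k 0) * Real.sin (k 1)) ^ 2 =
            (1 - Real.cos (k 0) ^ 2) * (1 - Real.cos (k 1) ^ 2) := by
          rw [mul_pow, hsin0, hsin1]
        linarith [atom_key (K₁/2 - d1/2) d1 d2 ε (Real.cos (k 0)) (Real.cos (k 1))
          (Real.sin (k 0) * Real.sin (k 1)) (ξ 0) (ξ 1) hd1 hd2 hεm hεd1 hεd2 hε0.le
          (Real.neg_one_le_cos (k 0)) (Real.cos_le_one (k 0))
          (Real.neg_one_le_cos (k 1)) (Real.cos_le_one (k 1)) hT]
      exact lt_of_lt_of_le hε0 (le_csInf ⟨_, hmemA⟩ hlow)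
  -- ===================== assemble =====================
  refine ⟨?_, ?_, hAiff, ?_⟩
  · rw [hLH, ← E1, ← E2]
    rcases le_total (2 * (a₂ / (Real.sqrt 2 * a₁)) * (K₂ / K₁)) 1 with h | h
    · rw [min_eq_right h, min_eq_right]
      have hP : 0 ≤ K₁ / 12 * ((1 + 2 * (K₂ / K₁)) / (1 + 2 * (a₂ / (Real.sqrt 2 * a₁)) * (K₂ / K₁))) := by positivity
      nlinarith
    · rw [min_eq_left h, min_eq_left, mul_one]
      have hP : 0 ≤ K₁ / 12 * ((1 + 2 * (K₂ / K₁)) / (1 + 2 * (a₂ / (Real.sqrt 2 * a₁)) * (K₂ / K₁))) := by positivity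
      nlinarith
  · rw [hLH]
    exact lt_min (by positivity) (by positivity)
  · have hα : 0 < a₂ / (Real.sqrt 2 * a₁) := by positivity
    have hκ : 0 < K₂ / K₁ := by positivity
    have hden : 0 < 1 + 2 * (a₂ / (Real.sqrt 2 * a₁)) * (K₂ / K₁) := by positivity
    rw [div_lt_iff₀ hden]
    constructor
    · intro h
      by_cases hhalf : 1/2 ≤ a₂ / (Real.sqrt 2 * a₁)
      · exact Or.inl hhalf
      · push_neg at hhalf
        refine Or.inr ⟨hhalf, ?_⟩
        rw [lt_div_iff₀ (by nlinarith)]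
        nlinarith
    · rintro (h | ⟨h1, hκb⟩)
      · nlinarith [mul_nonneg hκ.le (by linarith : (0:ℝ) ≤ 2 * (a₂ / (Real.sqrt 2 * a₁)) - 1)]
      · have h3 : 0 < 2 * (1 - 2 * (a₂ / (Real.sqrt 2 * a₁))) := by nlinarith
        rw [lt_div_iff₀ h3] at hκb
        nlinarith

end
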